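/- Let n, m ≥ 1, let f : ℤ/nℤ → ℤ/mℤ be congruence preserving, and let a_0, …, a_{n−1} ∈ ℤ/mℤ be its coefficients in the expansion f(x) = Σ_{k=0}^{n−1} a_k · C(x, k). Then for every k with 1 ≤ k ≤ n−1, the element k (viewed in ℤ/mℤ) divides a_k in ℤ/mℤ. -/

import Mathlib

open Finset Function
open scoped fwdDiff

/-- `ulcm k` is the least common multiple of `1, 2, …, k`, with `ulcm 0 = 1`. -/
def ulcm (k : ℕ) : ℕ := (Finset.Icc 1 k).lcm id

/-- `mu m` is the largest prime power dividing `m`. -/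
def mu (m : ℕ) : ℕ := m.primeFactors.sup fun p => p ^ m.factorization p

/-- `f : ZMod n → ZMod m` is congruence preserving. -/
def CongPres (n m : ℕ) (f : ZMod n → ZMod m) : Prop :=
  ∀ d : ℕ, ∀ hd : d ∣ m, ∀ a b : ℕ, a < n → b < n → a ≡ b [MOD d] →
    ZMod.castHom hd (ZMod d) (f a) = ZMod.castHom hd (ZMod d) (f b)

/-- `CP n m` is the number of congruence preserving functions `ZMod n → ZMod m`. -/
noncomputable def CP (n m : ℕ) : ℕ := Nat.card {f : ZMod n → ZMod m // CongPres n m f}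

lemma my_fwdDiff_iter_comp {G G' : Type*} [AddCommGroup G] [AddCommGroup G']
    (g : G →+ G') (F : ℕ → G) (t : ℕ) :
    (fwdDiff (1:ℕ))^[t] (fun x => g (F x)) = fun x => g ((fwdDiff (1:ℕ))^[t] F x) := by
  induction t generalizing F with
  | zero => simp
  | succ t ih =>
      rw [Function.iterate_succ_apply, Function.iterate_succ_apply,
        show fwdDiff (1:ℕ) (fun x => g (F x)) = fun x => g (fwdDiff (1:ℕ) F x) by
          ext x; simp [fwdDiff, map_sub], ih]

lemma my_fwdDiff_iter_zero {G : Type*} [AddCommGroup G] (t : ℕ) :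
    (fwdDiff (1:ℕ))^[t] (fun _ => (0:G)) = fun _ => 0 := by
  induction t with
  | zero => rfl
  | succ t ih => rw [Function.iterate_succ_apply, show fwdDiff (1:ℕ) (fun _ => (0:G)) = fun _ => 0 by
      ext x; simp [fwdDiff], ih]

lemma my_fwdDiff_iter_const {G : Type*} [AddCommGroup G] (c : G) (t : ℕ) (ht : 1 ≤ t) :
    (fwdDiff (1:ℕ))^[t] (fun _ => c) = fun _ => 0 := by
  obtain ⟨s, rfl⟩ : ∃ s, t = s + 1 := ⟨t - 1, by omega⟩
  rw [Function.iterate_succ_apply, fwdDiff_const, my_fwdDiff_iter_zero]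

lemma my_coeff_eq_fwdDiff {n m : ℕ} (a : Fin n → ZMod m) (k : Fin n) :
    (fwdDiff (1:ℕ))^[(k:ℕ)] (fun x : ℕ => ∑ l : Fin n, a l * (x.choose l : ZMod m)) 0 = a k := by
  have h1 : (fun x : ℕ => ∑ l : Fin n, a l * (x.choose l : ZMod m))
      = ∑ l : Fin n, a l • fun x : ℕ => ((Int.castAddHom (ZMod m)) ((x.choose l : ℤ))) := by
    ext x
    simp [Finset.sum_apply]
  rw [h1, fwdDiff_iter_finset_sum, Finset.sum_apply]
  have h2 : ∀ l : Fin n, ((fwdDiff (1:ℕ))^[(k:ℕ)] (a l • fun x : ℕ =>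
      ((Int.castAddHom (ZMod m)) ((x.choose l : ℤ))))) 0
      = a l • (((if (k:ℕ) = (l:ℕ) then (1:ℤ) else 0) : ℤ) : ZMod m) := by
    intro l
    rw [fwdDiff_iter_const_smul, Pi.smul_apply,
      my_fwdDiff_iter_comp (Int.castAddHom (ZMod m)) (fun x => (x.choose l : ℤ))]
    simp [fwdDiff_iter_choose_zero]
  rw [Finset.sum_congr rfl fun l _ => h2 l]
  simp [Fin.val_inj, smul_eq_mul, apply_ite]

lemma my_dvd_of_castHom_eq_zero {q d : ℕ} [NeZero q] [NeZero d] (hd : d ∣ q) (x : ZMod q)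
    (hx : ZMod.castHom hd (ZMod d) x = 0) : (d : ZMod q) ∣ x := by
  have h1 : ((x.val : ℕ) : ZMod d) = 0 := by
    rwa [ZMod.natCast_val, ← ZMod.castHom_apply (h := hd)]
  obtain ⟨c, hc⟩ := (ZMod.natCast_eq_zero_iff _ _).mp h1
  refine ⟨(c : ZMod q), ?_⟩
  rw [← ZMod.natCast_zmod_val x, hc]
  push_cast
  ring

lemma my_pow_dvd_choose_pow {p : ℕ} (hp : p.Prime) (e j : ℕ) (hj1 : 1 ≤ j) (hj2 : j ≤ p ^ e)
    (hv : padicValNat p j < e) : p ^ (e - padicValNat p j) ∣ (p ^ e).choose j := by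
  haveI : Fact p.Prime := ⟨hp⟩
  set v := padicValNat p j with hvdef
  have hq1 : 1 ≤ p ^ e := Nat.one_le_pow _ _ hp.pos
  have key : p ^ e * ((p ^ e - 1).choose (j - 1)) = (p ^ e).choose j * j := by
    have h := Nat.add_one_mul_choose_eq (p ^ e - 1) (j - 1)
    rw [Nat.sub_add_cancel hq1,
      Nat.sub_add_cancel hj1] at h
    exact h
  have h1 : p ^ e ∣ (p ^ e).choose j * j := ⟨_, key.symm⟩
  obtain ⟨j', hj'⟩ : p ^ v ∣ j := pow_padicValNat_dvd
  have hj'nz : ¬ p ∣ j' := by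
    intro hpj'
    have : p ^ (v + 1) ∣ j := by
      obtain ⟨c, hc⟩ := hpj'
      exact ⟨c, by rw [hj', hc]; ring⟩
    exact pow_succ_padicValNat_not_dvd (by omega) this
  have hev : v ≤ e := le_of_lt hv
  have h2 : p ^ (e - v) * p ^ v ∣ ((p ^ e).choose j * j') * p ^ v := by
    rw [← pow_add, Nat.sub_add_cancel hev]
    calc p ^ e ∣ (p ^ e).choose j * j := h1
      _ = (p ^ e).choose j * j' * p ^ v := by rw [hj']; ring
  have h3 : p ^ (e - v) ∣ (p ^ e).choose j * j' :=
    (Nat.mul_dvd_mul_iff_right (pow_pos hp.pos v)).mp h2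
  have hcop : Nat.Coprime (p ^ (e - v)) j' :=
    Nat.Coprime.pow_left _ ((Nat.Prime.coprime_iff_not_dvd hp).mpr hj'nz)
  exact hcop.dvd_of_dvd_mul_right h3

lemma my_core (n m : ℕ) (f : ZMod n → ZMod m) (hcp : CongPres n m f)
    (a : Fin n → ZMod m)
    (hf : ∀ x : ZMod n, f x = ∑ l : Fin n, a l * (Nat.choose x.val l : ZMod m))
    (k : Fin n) (hk : 1 ≤ (k : ℕ)) (p e : ℕ) (hp : p.Prime) (he : 1 ≤ e)
    (hqm : p ^ e ∣ m) (hqk : p ^ e ∣ (k : ℕ)) :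
    ZMod.castHom hqm (ZMod (p ^ e)) (a k) = 0 := by
  haveI : Fact p.Prime := ⟨hp⟩
  set q := p ^ e with hqdef
  set K := (k : ℕ) with hKdef
  have hKn : K < n := k.isLt
  have hqK : q ≤ K := Nat.le_of_dvd (by omega) hqk
  set π := ZMod.castHom hqm (ZMod q) with hπdef
  set B : ℕ → ZMod q := fun j => π (f (j : ZMod n)) with hBdef
  -- Step 1: π (a k) = Δ^[K] B 0
  have step1 : π (a k) = (fwdDiff (1:ℕ))^[K] B 0 := by
    rw [← my_coeff_eq_fwdDiff a k, ← hKdef,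
      show π ((fwdDiff (1:ℕ))^[K] (fun x : ℕ => ∑ l : Fin n, a l * (x.choose l : ZMod m)) 0)
        = (fwdDiff (1:ℕ))^[K]
            (fun x : ℕ => π.toAddMonoidHom ((fun y : ℕ => ∑ l : Fin n, a l * (y.choose l : ZMod m)) x)) 0 from
        by rw [my_fwdDiff_iter_comp]; rfl]
    rw [fwdDiff_iter_eq_sum_shift, fwdDiff_iter_eq_sum_shift]
    refine Finset.sum_congr rfl fun j hj => ?_
    simp only [Finset.mem_range] at hj
    congr 1
    have hjn : (0 + j • (1:ℕ)) < n := by simp only [smul_eq_mul, mul_one, zero_add]; omega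
    simp only [hBdef]
    rw [hf ((0 + j • (1:ℕ) : ℕ) : ZMod n), ZMod.val_natCast_of_lt hjn]
    rfl
  -- Step 2: vanishing of Δ^[q] B at small points
  haveI : NeZero q := ⟨(pow_pos hp.pos e).ne'⟩
  have vanish : ∀ i : ℕ, i + q < n → (fwdDiff (1:ℕ))^[q] B i = 0 := by
    intro i hiq
    have hzero : (fwdDiff (1:ℕ))^[q] (fun _ => B i) i = 0 := by
      rw [my_fwdDiff_iter_const _ _ (Nat.one_le_pow _ _ hp.pos)]
    have expand : (fwdDiff (1:ℕ))^[q] B i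
        = (fwdDiff (1:ℕ))^[q] B i - (fwdDiff (1:ℕ))^[q] (fun _ => B i) i := by
      rw [hzero, sub_zero]
    rw [expand, fwdDiff_iter_eq_sum_shift, fwdDiff_iter_eq_sum_shift, ← Finset.sum_sub_distrib]
    refine Finset.sum_eq_zero fun j hj => ?_
    simp only [Finset.mem_range] at hj
    simp only [smul_eq_mul, mul_one, zero_add]
    rw [← smul_sub]
    rcases Nat.eq_zero_or_pos j with rfl | hj1
    · simp
    have hjq : j ≤ q := by omega
    set v := min (padicValNat p j) e with hvdef
    haveI : NeZero (p ^ v) := ⟨(pow_pos hp.pos v).ne'⟩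
    have hvj : p ^ v ∣ j := dvd_trans (pow_dvd_pow p (min_le_left _ _)) pow_padicValNat_dvd
    have hvq : p ^ v ∣ q := pow_dvd_pow p (min_le_right _ _)
    have hvm : p ^ v ∣ m := hvq.trans hqm
    have hmod : (i + j) ≡ i [MOD p ^ v] :=
      ((Nat.modEq_iff_dvd' (Nat.le_add_right _ _)).mpr (by simpa using hvj)).symm
    have hij : i + j < n := by omega
    have hcast := hcp (p ^ v) hvm (i + j) i hij (by omega) hmod
    have hsub : ((p ^ v : ℕ) : ZMod q) ∣ (B (i + j) - B i) := by
      apply my_dvd_of_castHom_eq_zero hvq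
      rw [map_sub]
      have comp : ∀ x : ZMod m,
          ZMod.castHom hvq (ZMod (p ^ v)) (π x) = ZMod.castHom hvm (ZMod (p ^ v)) x := by
        intro x
        exact congrFun (congrArg (fun (g : ZMod m →+* ZMod (p ^ v)) => (g : ZMod m → ZMod (p ^ v)))
          (ZMod.castHom_comp hvq hqm)) x
      simp only [hBdef, comp]
      rw [hcast, sub_self]
    obtain ⟨t, ht⟩ := hsub
    rw [ht]
    have hdvd : q ∣ (q.choose j) * p ^ v := by
      by_cases hv : padicValNat p j < e
      · have h := my_pow_dvd_choose_pow hp e j hj1 hjq hv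
        have hveq : v = padicValNat p j := min_eq_left (le_of_lt hv)
        have : q = p ^ (e - padicValNat p j) * p ^ v := by
          rw [hveq, ← pow_add, hqdef]
          congr 1
          omega
        nth_rewrite 1 [this]
        exact mul_dvd_mul h dvd_rfl
      · have hveq : v = e := min_eq_right (by omega)
        rw [hveq, ← hqdef]
        exact dvd_mul_left q _
    have h0 : ((q.choose j * p ^ v : ℕ) : ZMod q) = 0 :=
      (ZMod.natCast_eq_zero_iff _ _).mpr hdvd
    have : ((-1 : ℤ) ^ (q - j) * (q.choose j)) • (((p ^ v : ℕ) : ZMod q) * t)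
        = ((-1 : ZMod q) ^ (q - j)) * (((q.choose j * p ^ v : ℕ)) : ZMod q) * t := by
      push_cast [zsmul_eq_mul]
      ring
    rw [this, h0]
    ring
  -- Step 3: conclude
  rw [step1, show K = (K - q) + q from (Nat.sub_add_cancel hqK).symm,
    Function.iterate_add_apply, fwdDiff_iter_eq_sum_shift]
  refine Finset.sum_eq_zero fun i hi => ?_
  simp only [Finset.mem_range] at hi
  have hz : (fwdDiff (1:ℕ))^[q] B (0 + i • (1:ℕ)) = 0 :=
    vanish _ (by simp only [smul_eq_mul, mul_one, zero_add]; omega)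
  rw [hz, smul_zero]

theorem stmt_7 (n m : ℕ) (hn : 1 ≤ n) (hm : 1 ≤ m) (f : ZMod n → ZMod m)
    (hcp : CongPres n m f) (a : Fin n → ZMod m)
    (hf : ∀ x : ZMod n, f x = ∑ k : Fin n, a k * (Nat.choose x.val k : ZMod m)) :
    ∀ k : Fin n, 1 ≤ (k : ℕ) → ((k : ℕ) : ZMod m) ∣ a k := by
  intro k hk1
  haveI : NeZero m := ⟨by omega⟩
  set K := (k : ℕ) with hK
  set g := Nat.gcd K m with hg
  have hgm : g ∣ m := Nat.gcd_dvd_right _ _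
  have hgK : g ∣ K := Nat.gcd_dvd_left _ _
  have hgval : g ∣ (a k).val := by
    rw [Nat.dvd_iff_prime_pow_dvd_dvd]
    intro p c hp hpc
    rcases Nat.eq_zero_or_pos c with rfl | hc
    · simpa using one_dvd _
    have hpn : p.Prime := hp
    have hpm : p ^ c ∣ m := hpc.trans hgm
    have hpK : p ^ c ∣ K := hpc.trans hgK
    have h0 := my_core n m f hcp a hf k hk1 p c hpn hc hpm hpK
    haveI : NeZero (p ^ c) := ⟨(pow_pos hpn.pos c).ne'⟩
    rw [ZMod.castHom_apply, ← ZMod.natCast_val] at h0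
    exact (ZMod.natCast_eq_zero_iff _ _).mp h0
  have stepB : ((g : ℕ) : ZMod m) ∣ a k := by
    obtain ⟨c, hc⟩ := hgval
    refine ⟨(c : ZMod m), ?_⟩
    rw [← ZMod.natCast_zmod_val (a k), hc]
    push_cast
    ring
  have stepA : ((K : ℕ) : ZMod m) ∣ ((g : ℕ) : ZMod m) := by
    have hb := Nat.gcd_eq_gcd_ab K m
    refine ⟨((Nat.gcdA K m : ℤ) : ZMod m), ?_⟩
    have hcast := congrArg (fun z : ℤ => (z : ZMod m)) hb
    push_cast at hcast
    rw [hcast]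
    simp [ZMod.natCast_self]
  exact stepA.trans stepB
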